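/- Let p be a prime. If G₇, G₈, G₉ are groups belonging to families 𝒢₇, 𝒢₈, 𝒢₉ respectively, then no two of them are isomorphic: G₇ ≇ G₈, G₇ ≇ G₉, and G₈ ≇ G₉. -/

import Mathlib

/-- Membership in family 𝒢₇: `G = ⟨x, y, t₁, t₂, t₃⟩`, `Z(G) = ⟨t₁⟩ × ⟨t₂⟩ × ⟨t₃⟩`,
`o(tᵢ) = p^{mᵢ}`, `x^p = t₂`, `y^p = t₃`, `[x,y] = t₁^{p^{m₁-1}}`. -/
def InFamilyG7 (p m₁ m₂ m₃ : ℕ) (G : Type*) [Group G] : Prop :=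
  ∃ x y t₁ t₂ t₃ : G,
    Subgroup.closure {x, y, t₁, t₂, t₃} = ⊤ ∧
    Subgroup.center G = Subgroup.closure {t₁, t₂, t₃} ∧
    Subgroup.zpowers t₁ ⊓ Subgroup.closure {t₂, t₃} = ⊥ ∧
    Subgroup.zpowers t₂ ⊓ Subgroup.closure {t₁, t₃} = ⊥ ∧
    Subgroup.zpowers t₃ ⊓ Subgroup.closure {t₁, t₂} = ⊥ ∧
    orderOf t₁ = p ^ m₁ ∧ orderOf t₂ = p ^ m₂ ∧ orderOf t₃ = p ^ m₃ ∧
    x ^ p = t₂ ∧ y ^ p = t₃ ∧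
    x⁻¹ * y⁻¹ * x * y = t₁ ^ p ^ (m₁ - 1)

/-- Membership in family 𝒢₈: `G = ⟨x, y, t₁, t₂, u₁⟩`, `Z(G) = ⟨t₁⟩ × ⟨t₂⟩ × ⟨u₁⟩`,
`o(t₁) = p^{m₁}`, `o(t₂) = p^{m₂}`, `o(u₁) = ∞`, `x^p = t₂`, `y^p = u₁`,
`[x,y] = t₁^{p^{m₁-1}}`. -/
def InFamilyG8 (p m₁ m₂ : ℕ) (G : Type*) [Group G] : Prop :=
  ∃ x y t₁ t₂ u₁ : G,
    Subgroup.closure {x, y, t₁, t₂, u₁} = ⊤ ∧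
    Subgroup.center G = Subgroup.closure {t₁, t₂, u₁} ∧
    Subgroup.zpowers t₁ ⊓ Subgroup.closure {t₂, u₁} = ⊥ ∧
    Subgroup.zpowers t₂ ⊓ Subgroup.closure {t₁, u₁} = ⊥ ∧
    Subgroup.zpowers u₁ ⊓ Subgroup.closure {t₁, t₂} = ⊥ ∧
    orderOf t₁ = p ^ m₁ ∧ orderOf t₂ = p ^ m₂ ∧ ¬ IsOfFinOrder u₁ ∧
    x ^ p = t₂ ∧ y ^ p = u₁ ∧
    x⁻¹ * y⁻¹ * x * y = t₁ ^ p ^ (m₁ - 1)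

/-- Membership in family 𝒢₉: `G = ⟨x, y, t₁, u₁, u₂⟩`, `Z(G) = ⟨t₁⟩ × ⟨u₁⟩ × ⟨u₂⟩`,
`o(t₁) = p^{m₁}`, `o(u₁) = o(u₂) = ∞`, `x^p = u₁`, `y^p = u₂`,
`[x,y] = t₁^{p^{m₁-1}}`. -/
def InFamilyG9 (p m₁ : ℕ) (G : Type*) [Group G] : Prop :=
  ∃ x y t₁ u₁ u₂ : G,
    Subgroup.closure {x, y, t₁, u₁, u₂} = ⊤ ∧
    Subgroup.center G = Subgroup.closure {t₁, u₁, u₂} ∧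
    Subgroup.zpowers t₁ ⊓ Subgroup.closure {u₁, u₂} = ⊥ ∧
    Subgroup.zpowers u₁ ⊓ Subgroup.closure {t₁, u₂} = ⊥ ∧
    Subgroup.zpowers u₂ ⊓ Subgroup.closure {t₁, u₁} = ⊥ ∧
    orderOf t₁ = p ^ m₁ ∧ ¬ IsOfFinOrder u₁ ∧ ¬ IsOfFinOrder u₂ ∧
    x ^ p = u₁ ∧ y ^ p = u₂ ∧
    x⁻¹ * y⁻¹ * x * y = t₁ ^ p ^ (m₁ - 1)



/-- An element of the center commutes with everything. -/
lemma commute_of_mem_center {G : Type*} [Group G] {a : G}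
    (ha : a ∈ Subgroup.center G) (b : G) : Commute a b :=
  (Subgroup.mem_center_iff.mp ha b).symm

/-- A subgroup generated by central torsion elements is torsion. -/
lemma isOfFinOrder_of_mem_closure {G : Type*} [Group G] {S : Set G}
    (hc : Subgroup.closure S ≤ Subgroup.center G)
    (ht : ∀ s ∈ S, IsOfFinOrder s) {g : G} (hg : g ∈ Subgroup.closure S) :
    IsOfFinOrder g := by
  induction hg using Subgroup.closure_induction with
  | mem s hs => exact ht s hs
  | one => exact IsOfFinOrder.one
  | mul x y hx hy ihx ihy =>
      exact (commute_of_mem_center (hc hx) y).isOfFinOrder_mul ihx ihy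
  | inv x hx ih => exact ih.inv

/-- In a subgroup of the center generated by two torsion elements and `u`,
every element is, modulo a power of `u`, torsion. -/
lemma exists_zpow_isOfFinOrder {G : Type*} [Group G] {t₁ t₂ u : G}
    (hc : Subgroup.closure {t₁, t₂, u} ≤ Subgroup.center G)
    (h1 : IsOfFinOrder t₁) (h2 : IsOfFinOrder t₂) {g : G}
    (hg : g ∈ Subgroup.closure {t₁, t₂, u}) :
    ∃ e : ℤ, IsOfFinOrder (g * u ^ e) := by
  have hu : u ∈ Subgroup.closure ({t₁, t₂, u} : Set G) :=
    Subgroup.subset_closure (by simp)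
  induction hg using Subgroup.closure_induction with
  | mem s hs =>
      rcases hs with rfl | rfl | rfl
      · exact ⟨0, by simpa using h1⟩
      · exact ⟨0, by simpa using h2⟩
      · exact ⟨-1, by simpa using IsOfFinOrder.one⟩
  | one => exact ⟨0, by simpa using IsOfFinOrder.one⟩
  | mul x y hx hy ihx ihy =>
      obtain ⟨e, he⟩ := ihx
      obtain ⟨f, hf⟩ := ihy
      refine ⟨e + f, ?_⟩
      have hcy : Commute (u ^ e) y :=
        commute_of_mem_center (Subgroup.zpow_mem _ (hc hu) e) y
      have key : x * y * u ^ (e + f) = (x * u ^ e) * (y * u ^ f) := by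
        rw [zpow_add, ← mul_assoc, mul_assoc x y (u ^ e), ← hcy.eq,
          ← mul_assoc x (u ^ e) y, mul_assoc]
      rw [key]
      have hcent : x * u ^ e ∈ Subgroup.center G :=
        mul_mem (hc hx) (Subgroup.zpow_mem _ (hc hu) e)
      exact (commute_of_mem_center hcent _).isOfFinOrder_mul he hf
  | inv x hx ih =>
      obtain ⟨e, he⟩ := ih
      refine ⟨-e, ?_⟩
      have : x⁻¹ * u ^ (-e) = (x * u ^ e)⁻¹ := by
        rw [mul_inv_rev, zpow_neg,
          (commute_of_mem_center (hc hx) (u ^ e)⁻¹).inv_left.eq]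
      rw [this]
      exact he.inv

/-- Independence of two infinite-order generators modulo torsion. -/
lemma zpow_mul_zpow_isOfFinOrder_eq_zero {G : Type*} [Group G] {t u₁ u₂ : G}
    (hd1 : Subgroup.zpowers u₁ ⊓ Subgroup.closure {t, u₂} = ⊥)
    (hu₁ : ¬ IsOfFinOrder u₁) (hu₂ : ¬ IsOfFinOrder u₂)
    (hcomm : Commute u₁ u₂) {i j : ℤ}
    (h : IsOfFinOrder (u₁ ^ i * u₂ ^ j)) : i = 0 ∧ j = 0 := by
  obtain ⟨n, hn, hpow⟩ := h.exists_pow_eq_one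
  have hc : Commute (u₁ ^ i) (u₂ ^ j) := hcomm.zpow_zpow i j
  have hpow' : u₁ ^ (i * n) * u₂ ^ (j * n) = 1 := by
    have := hc.mul_pow n
    rw [hpow] at this
    rw [zpow_mul, zpow_mul, zpow_natCast, zpow_natCast, ← this]
  have hmem : u₁ ^ (i * n) ∈ Subgroup.zpowers u₁ ⊓ Subgroup.closure {t, u₂} := by
    refine Subgroup.mem_inf.mpr ⟨Subgroup.zpow_mem _ (Subgroup.mem_zpowers u₁) _, ?_⟩
    have : u₁ ^ (i * n) = (u₂ ^ (j * n))⁻¹ := by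
      rw [eq_inv_iff_mul_eq_one]; exact hpow'
    rw [this]
    exact inv_mem (Subgroup.zpow_mem _ (Subgroup.subset_closure (by simp)) _)
  rw [hd1] at hmem
  have h1 : u₁ ^ (i * n) = 1 := by simpa using hmem
  have hi : i * n = 0 := by
    by_contra hne
    exact hu₁ (isOfFinOrder_iff_zpow_eq_one.mpr ⟨i * n, hne, h1⟩)
  have hiz : i = 0 := by
    rcases mul_eq_zero.mp hi with h | h
    · exact h
    · exact absurd h (by exact_mod_cast hn.ne')
  have h2 : u₂ ^ (j * n) = 1 := by
    rw [hiz] at hpow'; simpa using hpow'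
  have hj : j * n = 0 := by
    by_contra hne
    exact hu₂ (isOfFinOrder_iff_zpow_eq_one.mpr ⟨j * n, hne, h2⟩)
  have hjz : j = 0 := by
    rcases mul_eq_zero.mp hj with h | h
    · exact h
    · exact absurd h (by exact_mod_cast hn.ne')
  exact ⟨hiz, hjz⟩

lemma mulequiv_symm_mem_center {G H : Type*} [Group G] [Group H] (φ : G ≃* H) {h : H}
    (hh : h ∈ Subgroup.center H) : φ.symm h ∈ Subgroup.center G := by
  rw [Subgroup.mem_center_iff]
  intro g
  apply φ.injective
  simp only [map_mul, MulEquiv.apply_symm_apply]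
  exact Subgroup.mem_center_iff.mp hh (φ g)

lemma key_identity {G : Type*} [Group G] {a b u : G} (hab : Commute a b)
    (hau : Commute a u) (hbu : Commute b u) (e f : ℤ) :
    (a * u ^ e) ^ f * (b * u ^ f) ^ (-e) = a ^ f * b ^ (-e) := by
  rw [(hau.zpow_right e).mul_zpow, (hbu.zpow_right f).mul_zpow]
  have h1 : Commute ((u ^ e) ^ f) (b ^ (-e)) := by
    rw [← zpow_mul]; exact hbu.symm.zpow_zpow _ _
  calc a ^ f * (u ^ e) ^ f * (b ^ (-e) * (u ^ f) ^ (-e))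
      = a ^ f * ((u ^ e) ^ f * b ^ (-e)) * (u ^ f) ^ (-e) := by
        rw [mul_assoc, mul_assoc, mul_assoc]
    _ = a ^ f * (b ^ (-e) * (u ^ e) ^ f) * (u ^ f) ^ (-e) := by rw [h1.eq]
    _ = a ^ f * b ^ (-e) * ((u ^ e) ^ f * (u ^ f) ^ (-e)) := by
        rw [mul_assoc, mul_assoc, mul_assoc]
    _ = a ^ f * b ^ (-e) := by
        rw [← zpow_mul, ← zpow_mul, ← zpow_add]
        norm_num [mul_comm]

theorem familyG7_G8_G9_pairwise_not_iso (p : ℕ) (hp : p.Prime)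
    (G₇ : Type*) [Group G₇] (G₈ : Type*) [Group G₈] (G₉ : Type*) [Group G₉]
    (h₇ : ∃ m₁ m₂ m₃, 1 ≤ m₁ ∧ 1 ≤ m₂ ∧ 1 ≤ m₃ ∧ InFamilyG7 p m₁ m₂ m₃ G₇)
    (h₈ : ∃ m₁ m₂, 1 ≤ m₁ ∧ 1 ≤ m₂ ∧ InFamilyG8 p m₁ m₂ G₈)
    (h₉ : ∃ m₁, 1 ≤ m₁ ∧ InFamilyG9 p m₁ G₉) :
    IsEmpty (G₇ ≃* G₈) ∧ IsEmpty (G₇ ≃* G₉) ∧ IsEmpty (G₈ ≃* G₉) := by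
  obtain ⟨m₁, m₂, m₃, -, -, -, x₇, y₇, s₁, s₂, s₃, -, hZ7, -, -, -,
    ho1, ho2, ho3, -, -, -⟩ := h₇
  obtain ⟨n₁, n₂, -, -, x₈, y₈, t₁, t₂, u₁, -, hZ8, -, -, -,
    hq1, hq2, hu8, -, -, -⟩ := h₈
  obtain ⟨k₁, -, x₉, y₉, r₁, v₁, v₂, -, hZ9, hd9t, hd9a, hd9b,
    hr1, hv1, hv2, -, -, -⟩ := h₉
  -- torsion facts for the generators
  have hs₁ : IsOfFinOrder s₁ := orderOf_pos_iff.mp (ho1 ▸ pow_pos hp.pos m₁)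
  have hs₂ : IsOfFinOrder s₂ := orderOf_pos_iff.mp (ho2 ▸ pow_pos hp.pos m₂)
  have hs₃ : IsOfFinOrder s₃ := orderOf_pos_iff.mp (ho3 ▸ pow_pos hp.pos m₃)
  have ht₁ : IsOfFinOrder t₁ := orderOf_pos_iff.mp (hq1 ▸ pow_pos hp.pos n₁)
  have ht₂ : IsOfFinOrder t₂ := orderOf_pos_iff.mp (hq2 ▸ pow_pos hp.pos n₂)
  -- every central element of G₇ is torsion
  have htor7 : ∀ g ∈ Subgroup.center G₇, IsOfFinOrder g := by
    intro g hg
    rw [hZ7] at hg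
    refine isOfFinOrder_of_mem_closure hZ7.ge ?_ hg
    intro s hs
    rcases hs with rfl | rfl | rfl
    · exact hs₁
    · exact hs₂
    · exact hs₃
  have hu₁c : u₁ ∈ Subgroup.center G₈ := by
    rw [hZ8]; exact Subgroup.subset_closure (by simp)
  have hv₁c : v₁ ∈ Subgroup.center G₉ := by
    rw [hZ9]; exact Subgroup.subset_closure (by simp)
  have hv₂c : v₂ ∈ Subgroup.center G₉ := by
    rw [hZ9]; exact Subgroup.subset_closure (by simp)
  refine ⟨⟨fun φ => ?_⟩, ⟨fun φ => ?_⟩, ⟨fun φ => ?_⟩⟩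
  · -- G₇ ≃* G₈ is impossible
    have hA := htor7 _ (mulequiv_symm_mem_center φ hu₁c)
    exact hu8 (by simpa using φ.toMonoidHom.isOfFinOrder hA)
  · -- G₇ ≃* G₉ is impossible
    have hA := htor7 _ (mulequiv_symm_mem_center φ hv₁c)
    exact hv1 (by simpa using φ.toMonoidHom.isOfFinOrder hA)
  · -- G₈ ≃* G₉ is impossible
    set A := φ.symm v₁ with hAdef
    set B := φ.symm v₂ with hBdef
    have hAc : A ∈ Subgroup.center G₈ := mulequiv_symm_mem_center φ hv₁c
    have hBc : B ∈ Subgroup.center G₈ := mulequiv_symm_mem_center φ hv₂c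
    obtain ⟨e, he⟩ := exists_zpow_isOfFinOrder hZ8.ge ht₁ ht₂ (hZ8 ▸ hAc)
    obtain ⟨f, hf⟩ := exists_zpow_isOfFinOrder hZ8.ge ht₁ ht₂ (hZ8 ▸ hBc)
    have hAB : Commute A B := commute_of_mem_center hAc B
    have hAu : Commute A u₁ := commute_of_mem_center hAc u₁
    have hBu : Commute B u₁ := commute_of_mem_center hBc u₁
    have hCfin : IsOfFinOrder (A ^ f * B ^ (-e)) := by
      rw [← key_identity hAB hAu hBu e f]
      have hcomm : Commute ((A * u₁ ^ e) ^ f) ((B * u₁ ^ f) ^ (-e)) := by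
        refine Commute.zpow_zpow ?_ _ _
        exact commute_of_mem_center
          (mul_mem hAc (Subgroup.zpow_mem _ hu₁c e)) _
      exact hcomm.isOfFinOrder_mul he.zpow hf.zpow
    have hmap : IsOfFinOrder (v₁ ^ f * v₂ ^ (-e)) := by
      have := φ.toMonoidHom.isOfFinOrder hCfin
      simpa [hAdef, hBdef] using this
    obtain ⟨hfz, hez⟩ := zpow_mul_zpow_isOfFinOrder_eq_zero hd9a hv1 hv2
      (commute_of_mem_center hv₁c v₂) hmap
    have hez' : e = 0 := by omega
    have hAfin : IsOfFinOrder A := by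
      rw [hez'] at he; simpa using he
    exact hv1 (by simpa [hAdef] using φ.toMonoidHom.isOfFinOrder hAfin)
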